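/- Let a, b, c, d be real numbers with a² + b² ≠ 0, c² + d² ≠ 0 and a·d − b·c ≠ 0. Then there exists a real number φ such that (a·cosh 2φ + c·sinh 2φ)(a·sinh 2φ + c·cosh 2φ) + (b·cosh 2φ + d·sinh 2φ)(b·sinh 2φ + d·cosh 2φ) = 0. -/
import Mathlib


theorem exists_canonical_rotation
    (a b c d : ℝ)
    (h1 : a ^ 2 + b ^ 2 ≠ 0) (h2 : c ^ 2 + d ^ 2 ≠ 0) (h3 : a * d - b * c ≠ 0) :
    ∃ φ : ℝ,
      (a * Real.cosh (2 * φ) + c * Real.sinh (2 * φ)) *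
          (a * Real.sinh (2 * φ) + c * Real.cosh (2 * φ)) +
        (b * Real.cosh (2 * φ) + d * Real.sinh (2 * φ)) *
          (b * Real.sinh (2 * φ) + d * Real.cosh (2 * φ)) = 0 := by
  set S : ℝ := a ^ 2 + b ^ 2 + c ^ 2 + d ^ 2 with hS
  set P : ℝ := a * c + b * d with hP
  have hm : (a - c) ^ 2 + (b - d) ^ 2 > 0 := by
    rcases lt_or_eq_of_le (by positivity : (0:ℝ) ≤ (a - c) ^ 2 + (b - d) ^ 2) with h | h
    · exact h
    · exfalso
      have hac : a = c := by nlinarith [sq_nonneg (a - c), sq_nonneg (b - d)]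
      have hbd : b = d := by nlinarith [sq_nonneg (a - c), sq_nonneg (b - d)]
      apply h3; rw [hac, hbd]; ring
  have hp : (a + c) ^ 2 + (b + d) ^ 2 > 0 := by
    rcases lt_or_eq_of_le (by positivity : (0:ℝ) ≤ (a + c) ^ 2 + (b + d) ^ 2) with h | h
    · exact h
    · exfalso
      have hac : a = -c := by nlinarith [sq_nonneg (a + c), sq_nonneg (b + d)]
      have hbd : b = -d := by nlinarith [sq_nonneg (a + c), sq_nonneg (b + d)]
      apply h3; rw [hac, hbd]; ring
  have hSpos : 0 < S := by nlinarith
  have hD : 0 < S ^ 2 - 4 * P ^ 2 := by nlinarith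
  clear_value S P
  clear hm hp h1 h2 h3
  set K : ℝ := Real.sqrt (S ^ 2 - 4 * P ^ 2) with hK
  have hKpos : 0 < K := Real.sqrt_pos.mpr hD
  have hK2 : K ^ 2 = S ^ 2 - 4 * P ^ 2 := Real.sq_sqrt hD.le
  clear_value K
  set t : ℝ := Real.arsinh (-2 * P / K) with ht
  refine ⟨t / 4, ?_⟩
  have hsinh : Real.sinh t = -2 * P / K := by rw [ht]; exact Real.sinh_arsinh _
  have hcosht : Real.cosh t = S / K := by
    rw [ht, Real.cosh_arsinh]
    rw [show (1 : ℝ) + (-2 * P / K) ^ 2 = (S / K) ^ 2 by field_simp; nlinarith]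
    exact Real.sqrt_sq (by positivity)
  clear_value t
  set C : ℝ := Real.cosh (2 * (t / 4)) with hC
  set Sh : ℝ := Real.sinh (2 * (t / 4)) with hSh
  have hsin2 : Real.sinh t = 2 * Sh * C := by
    have := Real.sinh_two_mul (2 * (t / 4))
    rw [show (2:ℝ) * (2 * (t / 4)) = t by ring] at this
    rw [this, ← hSh, ← hC]
  have hcos2 : Real.cosh t = C ^ 2 + Sh ^ 2 := by
    have h2' := Real.cosh_two_mul (2 * (t / 4))
    have h3' := Real.cosh_sq_sub_sinh_sq (2 * (t / 4))
    rw [show (2:ℝ) * (2 * (t / 4)) = t by ring] at h2'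
    rw [← hC, ← hSh] at h2' h3'
    nlinarith
  clear_value C Sh
  rw [hsinh] at hsin2
  rw [hcosht] at hcos2
  have key : (a * C + c * Sh) * (a * Sh + c * C) + (b * C + d * Sh) * (b * Sh + d * C)
      = S * (Sh * C) + P * (C ^ 2 + Sh ^ 2) := by rw [hS, hP]; ring
  rw [key, ← hcos2]
  have hSC : Sh * C = -P / K := by
    field_simp at hsin2 ⊢
    linarith
  rw [hSC]
  field_simp
  ring
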